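/- Suppose the cCG iteration with initial condition X₀ is well defined and rank D_k = p (with D_kᵀAD_k invertible) for all 0 ≤ k < k* = ⌊n/p⌋. Then the subspace span[D_i]₀^{k*−1} has dimension p⌊n/p⌋, and for every canonical basis vector e_j of ℝᵖ, the column X_{k*}e_j minimizes f over the affine subspace X₀e_j + span[D_i]₀^{k*−1}, an affine subspace of ℝⁿ of dimension p⌊n/p⌋ (hence of codimension n − p⌊n/p⌋ ≤ p − 1). -/

import Mathlib

open Matrix

/-- The span in `ℝⁿ` of all the columns of the matrices `M 0, …, M (k-1)`. -/
def colSpanLt (n p : ℕ) (k : ℕ) (M : ℕ → Matrix (Fin n) (Fin p) ℝ) :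
    Submodule ℝ (Fin n → ℝ) :=
  Submodule.span ℝ {v : Fin n → ℝ | ∃ i < k, ∃ j : Fin p, v = fun r => M i r j}

/-- If the cCG iteration is well defined with `rank D_k = p` (and
`D_kᵀAD_k` invertible) for all `0 ≤ k < k* = ⌊n/p⌋`, then `span[D_i]₀^{k*−1}` has
dimension `p⌊n/p⌋`, and each column `X_{k*}e_j` minimizes `f` over the affine
subspace `X₀e_j + span[D_i]₀^{k*−1}` of dimension `p⌊n/p⌋`
(hence of codimension `n − p⌊n/p⌋ ≤ p − 1`). -/
theorem cCG_final_minimization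
    (n p : ℕ) (hn : 0 < n) (hp : 0 < p) (hpn : p ≤ n)
    (A : Matrix (Fin n) (Fin n) ℝ) (hA : A.PosDef)
    (b : Fin n → ℝ)
    (X R D : ℕ → Matrix (Fin n) (Fin p) ℝ)
    (α β : ℕ → Matrix (Fin p) (Fin p) ℝ)
    (hR : ∀ i, R i = A * X i - Matrix.vecMulVec b 1)
    (hD0 : D 0 = R 0)
    (hinv : ∀ i < n / p, IsUnit ((D i)ᵀ * A * D i).det)
    (hrank : ∀ i < n / p, (D i).rank = p)
    (hα : ∀ i < n / p, α i = -((R i)ᵀ * D i * ((D i)ᵀ * A * D i)⁻¹))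
    (hX : ∀ i < n / p, X (i + 1) = X i + D i * (α i)ᵀ)
    (hβ : ∀ i < n / p, β i = -((R (i + 1))ᵀ * A * D i * ((D i)ᵀ * A * D i)⁻¹))
    (hDs : ∀ i < n / p, D (i + 1) = R (i + 1) + D i * (β i)ᵀ)
    (f : (Fin n → ℝ) → ℝ)
    (hf : ∀ y, f y = (1 / 2) * (y ⬝ᵥ A *ᵥ y) - b ⬝ᵥ y)
    :
    Module.finrank ℝ (colSpanLt n p (n / p) D) = p * (n / p) ∧
      (∀ j : Fin p, ∀ v ∈ colSpanLt n p (n / p) D,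
        f (fun r => X (n / p) r j) ≤ f ((fun r => X 0 r j) + v)) ∧
      n - p * (n / p) ≤ p - 1 := by
  set K := n / p with hK
  have hK1 : 1 ≤ K := (Nat.one_le_div_iff hp).mpr hpn
  have hAt : Aᵀ = A := (show A.IsSymm by simpa using hA.isHermitian).eq
  -- recurrence for residuals
  have hRrec : ∀ k < K, R (k + 1) = R k + A * (D k * (α k)ᵀ) := by
    intro k hk
    rw [hR, hR, hX k hk, Matrix.mul_add]
    abel
  -- α k * Gram = -(RᵀD)
  have hαG : ∀ k < K, α k * ((D k)ᵀ * A * D k) = -((R k)ᵀ * D k) := by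
    intro k hk
    rw [hα k hk, Matrix.neg_mul, Matrix.mul_assoc ((R k)ᵀ * D k),
      Matrix.nonsing_inv_mul _ (hinv k hk), Matrix.mul_one]
  have hβG : ∀ k < K, β k * ((D k)ᵀ * A * D k) = -((R (k + 1))ᵀ * A * D k) := by
    intro k hk
    rw [hβ k hk, Matrix.neg_mul, Matrix.mul_assoc ((R (k + 1))ᵀ * A * D k),
      Matrix.nonsing_inv_mul _ (hinv k hk), Matrix.mul_one]
  -- R_{k+1}ᵀ D_k = 0
  have hRDsucc : ∀ k < K, (R (k + 1))ᵀ * D k = 0 := by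
    intro k hk
    have expand : (R (k + 1))ᵀ * D k
        = (R k)ᵀ * D k + α k * ((D k)ᵀ * A * D k) := by
      rw [hRrec k hk, Matrix.transpose_add, Matrix.add_mul]
      congr 1
      simp [Matrix.transpose_mul, hAt, Matrix.mul_assoc]
    rw [expand, hαG k hk, add_neg_cancel]
  -- D_{k+1}ᵀ A D_k = 0
  have hDADsucc : ∀ k < K, (D (k + 1))ᵀ * A * D k = 0 := by
    intro k hk
    have expand : (D (k + 1))ᵀ * A * D k
        = (R (k + 1))ᵀ * A * D k + β k * ((D k)ᵀ * A * D k) := by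
      rw [hDs k hk, Matrix.transpose_add, Matrix.add_mul, Matrix.add_mul]
      congr 1
      simp [Matrix.transpose_mul, Matrix.mul_assoc]
    rw [expand, hβG k hk, add_neg_cancel]
  -- rank of residuals
  have hrankR : ∀ i < K, (R i).rank = p := by
    intro i hi
    match i with
    | 0 => rw [← hD0]; exact hrank 0 hi
    | (m + 1) =>
      have hm : m < K := Nat.lt_of_succ_lt hi
      have hfac : D (m + 1)
          = (1 - D m * (((D m)ᵀ * A * D m)⁻¹)ᵀ * ((D m)ᵀ * A)) * R (m + 1) := by
        rw [Matrix.sub_mul, Matrix.one_mul, hDs m hm, hβ m hm]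
        congr 1
        simp only [Matrix.transpose_neg, Matrix.transpose_mul, Matrix.transpose_transpose,
          hAt, Matrix.mul_neg, Matrix.neg_mul, Matrix.mul_assoc]
        rfl
      refine le_antisymm (Matrix.rank_le_width _) ?_
      calc p = (D (m + 1)).rank := (hrank (m + 1) hi).symm
        _ ≤ (R (m + 1)).rank := by rw [hfac]; exact Matrix.rank_mul_le_right _ _
  -- RᵀR invertible
  have hRRunit : ∀ i < K, IsUnit ((R i)ᵀ * R i).det := by
    intro i hi
    rw [isUnit_iff_ne_zero, Ne, ← Matrix.exists_mulVec_eq_zero_iff]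
    rintro ⟨v, hv, hv0⟩
    have hker : (R i) *ᵥ v = 0 := by
      have h1 : ((R i) *ᵥ v) ⬝ᵥ ((R i) *ᵥ v) = 0 := by
        have : v ⬝ᵥ (((R i)ᵀ * R i) *ᵥ v) = 0 := by rw [hv0]; simp
        rwa [← Matrix.mulVec_mulVec, Matrix.dotProduct_mulVec,
          Matrix.vecMul_transpose] at this
      exact dotProduct_self_eq_zero.mp h1
    -- rank = p gives injectivity
    have hrk : (R i).rank = p := hrankR i hi
    have hkerbot : LinearMap.ker (R i).mulVecLin = ⊥ := by
      have hsum := LinearMap.finrank_range_add_finrank_ker (R i).mulVecLin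
      have hrange : Module.finrank ℝ (LinearMap.range (R i).mulVecLin) = p := hrk
      have hpi : Module.finrank ℝ (Fin p → ℝ) = p := by simp
      rw [hrange, hpi] at hsum
      have : Module.finrank ℝ (LinearMap.ker (R i).mulVecLin) = 0 := by omega
      exact Submodule.finrank_eq_zero.mp this
    have : v ∈ LinearMap.ker (R i).mulVecLin := by
      simpa [LinearMap.mem_ker, Matrix.mulVecLin_apply] using hker
    rw [hkerbot] at this
    exact hv (by simpa using this)
  -- RᵢᵀDᵢ = RᵢᵀRᵢ
  have hRDi : ∀ i < K, (R i)ᵀ * D i = (R i)ᵀ * R i := by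
    intro i hi
    match i with
    | 0 => rw [hD0]
    | (m + 1) =>
      have hm : m < K := Nat.lt_of_succ_lt hi
      rw [hDs m hm, Matrix.mul_add, ← Matrix.mul_assoc, hRDsucc m hm,
        Matrix.zero_mul, add_zero]
  -- α invertible
  have hαunit : ∀ i < K, IsUnit (α i).det := by
    intro i hi
    rw [hα i hi]
    have h1 : IsUnit (((D i)ᵀ * A * D i)⁻¹).det :=
      Matrix.isUnit_nonsing_inv_det _ (hinv i hi)
    rw [isUnit_iff_ne_zero] at *
    rw [Matrix.det_neg, Matrix.det_mul, hRDi i hi]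
    have h2 := (isUnit_iff_ne_zero).mp (hRRunit i hi)
    positivity
  -- main induction
  have hmain : ∀ k, k ≤ K → ∀ i, i < k →
      (R k)ᵀ * D i = 0 ∧ (D k)ᵀ * A * D i = 0 := by
    intro k
    induction k with
    | zero => intro _ i hi; omega
    | succ k IH =>
      intro hk1 i hi
      have hk : k < K := hk1
      have IH' := IH (le_of_lt hk)
      -- part a
      have ha : ∀ i < k + 1, (R (k + 1))ᵀ * D i = 0 := by
        intro i hi
        rcases Nat.lt_succ_iff_lt_or_eq.mp hi with hik | hik
        · have expand : (R (k + 1))ᵀ * D i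
              = (R k)ᵀ * D i + α k * ((D k)ᵀ * A * D i) := by
            rw [hRrec k hk, Matrix.transpose_add, Matrix.add_mul]
            congr 1
            simp [Matrix.transpose_mul, hAt, Matrix.mul_assoc]
          rw [expand, (IH' i hik).1, (IH' i hik).2, Matrix.mul_zero, add_zero]
        · subst hik; exact hRDsucc i hk
      -- part a' : residual orthogonality
      have ha' : ∀ j < k + 1, (R (k + 1))ᵀ * R j = 0 := by
        intro j hj
        match j with
        | 0 => rw [← hD0]; exact ha 0 hj
        | (m + 1) =>
          have hm : m < K := by omega
          have : R (m + 1) = D (m + 1) - D m * (β m)ᵀ := by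
            rw [hDs m hm]; abel
          rw [this, Matrix.mul_sub, ha (m + 1) hj, ← Matrix.mul_assoc,
            ha m (by omega), Matrix.zero_mul, sub_zero]
      refine ⟨ha i hi, ?_⟩
      -- part b
      rcases Nat.lt_succ_iff_lt_or_eq.mp hi with hik | hik
      · have hiK : i < K := lt_trans hik hk
        have hADα : A * (D i * (α i)ᵀ) = R (i + 1) - R i := by
          rw [hRrec i hiK]; abel
        have hRAD0 : ((R (k + 1))ᵀ * A * D i) * (α i)ᵀ = 0 := by
          have : ((R (k + 1))ᵀ * A * D i) * (α i)ᵀ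
              = (R (k + 1))ᵀ * (A * (D i * (α i)ᵀ)) := by
            simp [Matrix.mul_assoc]
          rw [this, hADα, Matrix.mul_sub, ha' (i + 1) (by omega),
            ha' i (by omega), sub_zero]
        have hαT : IsUnit ((α i)ᵀ).det := by
          rw [Matrix.det_transpose]; exact hαunit i hiK
        have hRAD : (R (k + 1))ᵀ * A * D i = 0 := by
          have := congrArg (fun M => M * ((α i)ᵀ)⁻¹) hRAD0
          simpa [Matrix.mul_assoc, Matrix.mul_nonsing_inv _ hαT] using this
        have expand : (D (k + 1))ᵀ * A * D i
            = (R (k + 1))ᵀ * A * D i + β k * ((D k)ᵀ * A * D i) := by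
          rw [hDs k hk, Matrix.transpose_add, Matrix.add_mul, Matrix.add_mul]
          congr 1
          simp [Matrix.transpose_mul, Matrix.mul_assoc]
        rw [expand, hRAD, (IH' i hik).2, Matrix.mul_zero, add_zero]
      · subst hik; exact hDADsucc i hk
  -- consequences of the main induction
  have hRD_K : ∀ i < K, (R K)ᵀ * D i = 0 := fun i hi => (hmain K le_rfl i hi).1
  have hDAD : ∀ i j : ℕ, i < j → j < K → (D j)ᵀ * A * D i = 0 :=
    fun i j h hj => (hmain j (le_of_lt hj) i h).2
  set V := colSpanLt n p K D with hV
  have hgen : ∀ i < K, ∀ j : Fin p, (fun r => D i r j) ∈ V :=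
    fun i hi j => Submodule.subset_span ⟨i, hi, j, rfl⟩
  have hmulvec : ∀ (c : Fin p → ℝ) (M : Matrix (Fin n) (Fin p) ℝ),
      M *ᵥ c = ∑ j, c j • (fun r => M r j) := by
    intro c M
    funext r
    simp [Matrix.mulVec, dotProduct, Finset.sum_apply, mul_comm]
  have hmem : ∀ i < K, ∀ c : Fin p → ℝ, (D i *ᵥ c) ∈ V := by
    intro i hi c
    rw [hmulvec]
    exact Submodule.sum_mem _ fun j _ => Submodule.smul_mem _ _ (hgen i hi j)
  -- orthogonality of V against the columns of R K
  have hORTH : ∀ v ∈ V, ∀ j : Fin p, v ⬝ᵥ (fun r => R K r j) = 0 := by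
    intro v hv j
    induction hv using Submodule.span_induction with
    | mem x hx =>
      obtain ⟨i, hi, m, rfl⟩ := hx
      have h0 : (D i)ᵀ * R K = 0 := by
        have := congrArg Matrix.transpose (hRD_K i hi)
        simpa [Matrix.transpose_mul] using this
      have := congrFun (congrFun h0 m) j
      simpa [Matrix.mul_apply, dotProduct, Matrix.transpose_apply] using this
    | zero => simp
    | add x y _ _ hx hy => simp [add_dotProduct, hx, hy]
    | smul a x _ hx => simp [smul_dotProduct, hx]
  -- the iterates stay in the affine subspace
  have hXmem : ∀ j : Fin p, ∀ k, k ≤ K →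
      ((fun r => X k r j) - fun r => X 0 r j) ∈ V := by
    intro j k
    induction k with
    | zero => intro _; simpa using Submodule.zero_mem V
    | succ k IH =>
      intro hk1
      have hk : k < K := hk1
      have hcol : (fun r => X (k + 1) r j)
          = (fun r => X k r j) + D k *ᵥ (fun s => (α k)ᵀ s j) := by
        funext r
        rw [hX k hk]
        simp [Matrix.add_apply, Matrix.mul_apply, Matrix.mulVec, dotProduct]
      rw [hcol]
      have : (fun r => X k r j) + D k *ᵥ (fun s => (α k)ᵀ s j) - (fun r => X 0 r j)
          = ((fun r => X k r j) - fun r => X 0 r j) + D k *ᵥ (fun s => (α k)ᵀ s j) := by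
        abel
      rw [this]
      exact Submodule.add_mem _ (IH (le_of_lt hk)) (hmem k hk _)
  -- the minimization property
  have hmin : ∀ j : Fin p, ∀ v ∈ V,
      f (fun r => X K r j) ≤ f ((fun r => X 0 r j) + v) := by
    intro j v hv
    set xK : Fin n → ℝ := fun r => X K r j with hxK
    set x0 : Fin n → ℝ := fun r => X 0 r j with hx0
    set w : Fin n → ℝ := x0 + v - xK with hw
    have hwV : w ∈ V := by
      have h : w = v - (xK - x0) := by rw [hw]; abel
      rw [h]
      exact Submodule.sub_mem _ hv (hXmem j K le_rfl)
    have hres : (fun r => (R K) r j) = A *ᵥ xK - b := by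
      funext r
      rw [hR K]
      simp [Matrix.sub_apply, Matrix.mul_apply, Matrix.vecMulVec_apply,
        Matrix.mulVec, dotProduct, hxK]
    have hw0 : w ⬝ᵥ (A *ᵥ xK) - w ⬝ᵥ b = 0 := by
      have := hORTH w hwV j
      rw [hres, dotProduct_sub] at this
      linarith
    have hpsd : 0 ≤ w ⬝ᵥ A *ᵥ w := by simpa using hA.posSemidef.dotProduct_mulVec_nonneg w
    have hsymm : xK ⬝ᵥ (A *ᵥ w) = w ⬝ᵥ (A *ᵥ xK) := by
      rw [Matrix.dotProduct_mulVec, ← Matrix.mulVec_transpose, hAt,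
        dotProduct_comm]
    have hxv : x0 + v = xK + w := by rw [hw]; abel
    rw [hxv, hf, hf]
    have hexp : (xK + w) ⬝ᵥ A *ᵥ (xK + w)
        = xK ⬝ᵥ A *ᵥ xK + 2 * (w ⬝ᵥ A *ᵥ xK) + w ⬝ᵥ A *ᵥ w := by
      simp only [Matrix.mulVec_add, dotProduct_add, add_dotProduct]
      rw [hsymm]; ring
    have hbx : b ⬝ᵥ (xK + w) = b ⬝ᵥ xK + w ⬝ᵥ b := by
      rw [dotProduct_add, dotProduct_comm b w]
    rw [hexp, hbx]
    linarith
  -- dimension of the span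
  have hcard : Module.finrank ℝ V = p * K := by
    have hKpos : 0 < K := hK1
    set vfam : (Fin K × Fin p) → (Fin n → ℝ) := fun q => fun r => D q.1 r q.2 with hvfam
    have hsetr : {v : Fin n → ℝ | ∃ i < K, ∃ j : Fin p, v = fun r => D i r j}
        = Set.range vfam := by
      ext x
      constructor
      · rintro ⟨i, hi, j, rfl⟩; exact ⟨(⟨i, hi⟩, j), rfl⟩
      · rintro ⟨⟨i, j⟩, rfl⟩; exact ⟨i, i.isLt, j, rfl⟩
    have hDAD' : ∀ i l : Fin K, i ≠ l → (D (l : ℕ))ᵀ * A * D (i : ℕ) = 0 := by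
      intro i l hne
      rcases lt_or_gt_of_ne (fun h => hne (Fin.ext h) : (i : ℕ) ≠ (l : ℕ)) with h | h
      · exact hDAD i l h l.isLt
      · have h0 := hDAD l i h i.isLt
        have := congrArg Matrix.transpose h0
        simpa [Matrix.transpose_mul, hAt, Matrix.mul_assoc] using this
    have hLI : LinearIndependent ℝ vfam := by
      rw [Fintype.linearIndependent_iff]
      intro g hg
      have hsum : (∑ i : Fin K, D (i : ℕ) *ᵥ (fun j => g (i, j))) = 0 := by
        rw [← hg, Fintype.sum_prod_type]
        exact Finset.sum_congr rfl fun i _ => (hmulvec _ _)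
      have hzero : ∀ l : Fin K, (fun j => g (l, j)) = 0 := by
        intro l
        have happ := congrArg (((D (l : ℕ))ᵀ * A).mulVecLin) hsum
        rw [map_sum, map_zero] at happ
        simp only [Matrix.mulVecLin_apply, Matrix.mulVec_mulVec] at happ
        rw [Finset.sum_eq_single l] at happ
        · have := congrArg ((((D (l : ℕ))ᵀ * A * D (l : ℕ))⁻¹) *ᵥ ·) happ
          simpa [Matrix.mulVec_mulVec, Matrix.nonsing_inv_mul _ (hinv l l.isLt)]
            using this
        · intro i _ hne
          rw [Matrix.mul_assoc, ← Matrix.mul_assoc, hDAD' i l hne, Matrix.zero_mulVec]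
        · intro h; exact absurd (Finset.mem_univ l) h
      intro q
      obtain ⟨l, j⟩ := q
      exact congrFun (hzero l) j
    have hVeq : V = Submodule.span ℝ (Set.range vfam) := by
      rw [hV]; unfold colSpanLt; rw [hsetr]
    rw [hVeq, finrank_span_eq_card hLI]
    simp [mul_comm]
  have harith : n - p * (n / p) ≤ p - 1 := by
    have h1 := Nat.div_add_mod n p
    have h2 := Nat.mod_lt n hp
    omega
  exact ⟨hcard, hmin, harith⟩
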